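/- Uniqueness of bounded exact invariants for almost surely terminating loops: suppose ∑' τ, W σ τ = 1 for every σ (the loop is AST), and suppose there is a constant k : ℝ≥0 such that the post-expectation E : Σ → ℝ≥0∞ satisfies E σ ≤ k for all σ. Then for every expectation I : Σ → ℝ≥0∞ with I σ ≤ k for all σ, one has I = Φ_E I if and only if I = lfp Φ_E. In particular, the loop has exactly one exact invariant bounded by k with respect to E, namely its weakest pre-expectation lfp Φ_E. -/

import Mathlib

open ENNReal NNReal

/-- The characteristic function of the loop `while G do body` with respect to
post-expectation `E`. -/
noncomputable def Phi {S : Type*} (G : S → Prop) [DecidablePred G] (body : S → PMF S)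
    (E : S → ℝ≥0∞) (X : S → ℝ≥0∞) : S → ℝ≥0∞ :=
  fun σ => if G σ then ∑' τ, body σ τ * X τ else E σ

theorem Phi_monotone {S : Type*} (G : S → Prop) [DecidablePred G] (body : S → PMF S)
    (E : S → ℝ≥0∞) : Monotone (Phi G body E) := by
  intro X Y hXY σ
  simp only [Phi]
  split
  · exact ENNReal.tsum_le_tsum fun τ => by gcongr <;> exact hXY τ
  · exact le_rfl

/-- The characteristic function, bundled as a monotone map on the complete
lattice of expectations. -/
noncomputable def PhiHom {S : Type*} (G : S → Prop) [DecidablePred G] (body : S → PMF S)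
    (E : S → ℝ≥0∞) : (S → ℝ≥0∞) →o (S → ℝ≥0∞) :=
  ⟨Phi G body E, Phi_monotone G body E⟩

/-- The stopped `n`-step kernels of the loop `while G do body`. -/
noncomputable def mu {S : Type*} (G : S → Prop) [DecidablePred G] [DecidableEq S]
    (body : S → PMF S) : ℕ → S → S → ℝ≥0∞
  | 0 => fun σ τ => if ¬ G σ ∧ τ = σ then 1 else 0
  | n + 1 => fun σ =>
      if G σ then (fun τ => ∑' σ', body σ σ' * mu G body n σ' τ) else mu G body 0 σ

/-- The loop's output sub-distribution. -/
noncomputable def W {S : Type*} (G : S → Prop) [DecidablePred G] [DecidableEq S]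
    (body : S → PMF S) (σ τ : S) : ℝ≥0∞ :=
  ⨆ n, mu G body n σ τ

/-! ### Auxiliary lemmas -/

lemma tsum_iSup_of_monotone' {α : Type*} {f : ℕ → α → ℝ≥0∞}
    (hf : ∀ a, Monotone fun n => f n a) :
    ∑' a, ⨆ n, f n a = ⨆ n, ∑' a, f n a := by
  refine le_antisymm ?_ (iSup_le fun n => ENNReal.tsum_le_tsum fun a => le_iSup (f · a) n)
  rw [ENNReal.tsum_eq_iSup_sum]
  refine iSup_le fun s => ?_
  rw [ENNReal.finsetSum_iSup_of_monotone (f := fun a n => f n a) hf]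
  exact iSup_mono fun n => ENNReal.sum_le_tsum s

lemma swap_helper {S : Type*} (b : S → ℝ≥0∞) (μ : S → S → ℝ≥0∞) (f : S → ℝ≥0∞) :
    ∑' τ, (∑' σ', b σ' * μ σ' τ) * f τ = ∑' σ', b σ' * ∑' τ, μ σ' τ * f τ := by
  simp_rw [← ENNReal.tsum_mul_right]
  rw [ENNReal.tsum_comm]
  simp_rw [mul_assoc, ENNReal.tsum_mul_left]

lemma swap_helper1 {S : Type*} (b : S → ℝ≥0∞) (μ : S → S → ℝ≥0∞) :
    ∑' τ, ∑' σ', b σ' * μ σ' τ = ∑' σ', b σ' * ∑' τ, μ σ' τ := by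
  rw [ENNReal.tsum_comm]
  simp_rw [ENNReal.tsum_mul_left]

lemma mu_succ_apply {S : Type*} (G : S → Prop) [DecidablePred G] [DecidableEq S]
    (body : S → PMF S) (n : ℕ) (σ τ : S) :
    mu G body (n + 1) σ τ =
      if G σ then ∑' σ', (body σ σ' : ℝ≥0∞) * mu G body n σ' τ else mu G body 0 σ τ := by
  conv_lhs => rw [mu]
  by_cases h : G σ <;> simp [h]

section Loop

variable {S : Type*} (G : S → Prop) [DecidablePred G] [DecidableEq S] (body : S → PMF S)

lemma mu_mono_succ : ∀ n (σ τ : S), mu G body n σ τ ≤ mu G body (n + 1) σ τ := by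
  intro n
  induction n with
  | zero =>
    intro σ τ
    by_cases h : G σ
    · simp [mu, h]
    · simp [mu, h]
  | succ n ih =>
    intro σ τ
    by_cases h : G σ
    · rw [mu_succ_apply, mu_succ_apply, if_pos h, if_pos h]
      exact ENNReal.tsum_le_tsum fun σ' => mul_le_mul_right (ih σ' τ) _
    · rw [mu_succ_apply, mu_succ_apply, if_neg h, if_neg h]

lemma mu_mono (σ τ : S) : Monotone fun n => mu G body n σ τ :=
  monotone_nat_of_le_succ fun n => mu_mono_succ G body n σ τ

lemma mu_tsum_le_one : ∀ n (σ : S), ∑' τ, mu G body n σ τ ≤ 1 := by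
  intro n
  induction n with
  | zero =>
    intro σ
    by_cases h : G σ
    · simp [mu, h]
    · simp [mu, h, tsum_ite_eq]
  | succ n ih =>
    intro σ
    by_cases h : G σ
    · simp_rw [mu_succ_apply, if_pos h]
      rw [swap_helper1]
      calc ∑' σ', (body σ σ' : ℝ≥0∞) * ∑' τ, mu G body n σ' τ
          ≤ ∑' σ', (body σ σ' : ℝ≥0∞) * 1 :=
            ENNReal.tsum_le_tsum fun σ' => mul_le_mul_right (ih σ') _
        _ = 1 := by simp [body σ |>.tsum_coe]
    · simp_rw [mu_succ_apply, if_neg h]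
      simp [mu, h, tsum_ite_eq]

lemma fixed_bounds {E X : S → ℝ≥0∞} (k : ℝ≥0) (hE : ∀ σ, E σ ≤ (k : ℝ≥0∞))
    (hXk : ∀ σ, X σ ≤ (k : ℝ≥0∞)) (hfix : X = Phi G body E X) :
    ∀ n (σ : S), (∑' τ, mu G body n σ τ * E τ) ≤ X σ ∧
      X σ ≤ (∑' τ, mu G body n σ τ * E τ) + k * (1 - ∑' τ, mu G body n σ τ) := by
  have hfix' : ∀ σ, X σ = if G σ then ∑' τ, body σ τ * X τ else E σ := fun σ =>
    congrFun hfix σ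
  intro n
  induction n with
  | zero =>
    intro σ
    by_cases h : G σ
    · constructor
      · simp [mu, h]
      · calc X σ ≤ (k : ℝ≥0∞) := hXk σ
          _ = (∑' τ, mu G body 0 σ τ * E τ) + k * (1 - ∑' τ, mu G body 0 σ τ) := by
            simp [mu, h]
    · have hX : X σ = E σ := by rw [hfix' σ, if_neg h]
      have hμE : (∑' τ, mu G body 0 σ τ * E τ) = E σ := by
        rw [show (fun τ => mu G body 0 σ τ * E τ) = fun τ => if τ = σ then E σ else 0 by
          funext τ
          by_cases hτ : τ = σ <;> simp [mu, h, hτ]]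
        exact tsum_ite_eq σ (fun _ => E σ)
      have hμT : (∑' τ, mu G body 0 σ τ) = 1 := by
        simp [mu, h, tsum_ite_eq]
      rw [hX, hμE, hμT]
      simp
  | succ n ih =>
    intro σ
    by_cases h : G σ
    · have hXσ : X σ = ∑' σ', (body σ σ' : ℝ≥0∞) * X σ' := by rw [hfix' σ, if_pos h]
      have hA : (∑' τ, mu G body (n + 1) σ τ * E τ)
          = ∑' σ', (body σ σ' : ℝ≥0∞) * ∑' τ, mu G body n σ' τ * E τ := by
        simp_rw [mu_succ_apply, if_pos h]
        exact swap_helper _ _ _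
      have hT : (∑' τ, mu G body (n + 1) σ τ)
          = ∑' σ', (body σ σ' : ℝ≥0∞) * ∑' τ, mu G body n σ' τ := by
        simp_rw [mu_succ_apply, if_pos h]
        exact swap_helper1 _ _
      constructor
      · rw [hA, hXσ]
        exact ENNReal.tsum_le_tsum fun σ' => mul_le_mul_right (ih σ').1 _
      · have key : ∑' σ', (body σ σ' : ℝ≥0∞) * (1 - ∑' τ, mu G body n σ' τ)
            ≤ 1 - ∑' τ, mu G body (n + 1) σ τ := by
          rw [hT]
          have hfin : (∑' σ', (body σ σ' : ℝ≥0∞) * ∑' τ, mu G body n σ' τ) ≠ ∞ := by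
            refine ne_top_of_le_ne_top one_ne_top ?_
            calc ∑' σ', (body σ σ' : ℝ≥0∞) * ∑' τ, mu G body n σ' τ
                ≤ ∑' σ', (body σ σ' : ℝ≥0∞) * 1 :=
                  ENNReal.tsum_le_tsum fun σ' =>
                    mul_le_mul_right (mu_tsum_le_one G body n σ') _
              _ = 1 := by simp [(body σ).tsum_coe]
          refine le_of_eq (ENNReal.eq_sub_of_add_eq hfin ?_)
          rw [← ENNReal.tsum_add]
          calc ∑' σ', ((body σ σ' : ℝ≥0∞) * (1 - ∑' τ, mu G body n σ' τ)
                  + (body σ σ' : ℝ≥0∞) * ∑' τ, mu G body n σ' τ)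
              = ∑' σ', (body σ σ' : ℝ≥0∞)
                  * ((1 - ∑' τ, mu G body n σ' τ) + ∑' τ, mu G body n σ' τ) := by
                simp_rw [mul_add]
            _ = ∑' σ', (body σ σ' : ℝ≥0∞) := by
                congr 1; funext σ'
                rw [tsub_add_cancel_of_le (mu_tsum_le_one G body n σ'), mul_one]
            _ = 1 := (body σ).tsum_coe
        calc X σ = ∑' σ', (body σ σ' : ℝ≥0∞) * X σ' := hXσ
          _ ≤ ∑' σ', (body σ σ' : ℝ≥0∞) * ((∑' τ, mu G body n σ' τ * E τ)
                + k * (1 - ∑' τ, mu G body n σ' τ)) :=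
              ENNReal.tsum_le_tsum fun σ' => mul_le_mul_right (ih σ').2 _
          _ = (∑' σ', (body σ σ' : ℝ≥0∞) * ∑' τ, mu G body n σ' τ * E τ)
                + ∑' σ', (body σ σ' : ℝ≥0∞) * (k * (1 - ∑' τ, mu G body n σ' τ)) := by
              simp_rw [mul_add]; exact ENNReal.tsum_add
          _ = (∑' τ, mu G body (n + 1) σ τ * E τ)
                + k * ∑' σ', (body σ σ' : ℝ≥0∞) * (1 - ∑' τ, mu G body n σ' τ) := by
              rw [hA]
              congr 1
              simp_rw [mul_left_comm _ (k : ℝ≥0∞)]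
              exact (ENNReal.tsum_mul_left).symm ▸ ENNReal.tsum_mul_left
          _ ≤ (∑' τ, mu G body (n + 1) σ τ * E τ)
                + k * (1 - ∑' τ, mu G body (n + 1) σ τ) := by
              exact add_le_add_right (mul_le_mul_right key _) _
    · have h0 : ∀ τ, mu G body (n + 1) σ τ = mu G body 0 σ τ := by
        intro τ; simp [mu, h]
      simp_rw [h0]
      have hX : X σ = E σ := by rw [hfix' σ, if_neg h]
      have hμE : (∑' τ, mu G body 0 σ τ * E τ) = E σ := by
        rw [show (fun τ => mu G body 0 σ τ * E τ) = fun τ => if τ = σ then E σ else 0 by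
          funext τ
          by_cases hτ : τ = σ <;> simp [mu, h, hτ]]
        exact tsum_ite_eq σ (fun _ => E σ)
      have hμT : (∑' τ, mu G body 0 σ τ) = 1 := by
        simp [mu, h, tsum_ite_eq]
      rw [hX, hμE, hμT]
      simp

end Loop

/-- uniqueness of bounded exact invariants for almost surely
terminating loops. -/
theorem exact_invariant_unique_of_AST {S : Type*} [Countable S] [DecidableEq S]
    (G : S → Prop) [DecidablePred G] (body : S → PMF S)
    (hAST : ∀ σ : S, ∑' τ, W G body σ τ = 1)
    (k : ℝ≥0) (E : S → ℝ≥0∞) (hE : ∀ σ, E σ ≤ (k : ℝ≥0∞)) :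
    ∀ I : S → ℝ≥0∞, (∀ σ, I σ ≤ (k : ℝ≥0∞)) →
      (I = Phi G body E I ↔ I = OrderHom.lfp (PhiHom G body E)) := by
  intro I hIk
  set L := OrderHom.lfp (PhiHom G body E) with hL
  have hLfix : L = Phi G body E L := (OrderHom.map_lfp (PhiHom G body E)).symm
  have hLk : ∀ σ, L σ ≤ (k : ℝ≥0∞) := by
    have : L ≤ fun _ => (k : ℝ≥0∞) := by
      refine OrderHom.lfp_le _ ?_
      intro σ
      show Phi G body E (fun _ => (k : ℝ≥0∞)) σ ≤ (k : ℝ≥0∞)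
      simp only [Phi]
      split
      · rw [ENNReal.tsum_mul_right, (body σ).tsum_coe, one_mul]
      · exact hE σ
    exact this
  have hTsup : ∀ σ : S, (⨆ n, ∑' τ, mu G body n σ τ) = 1 := by
    intro σ
    rw [← tsum_iSup_of_monotone' fun τ => mu_mono G body σ τ]
    exact hAST σ
  have main : ∀ X Y : S → ℝ≥0∞, (∀ σ, X σ ≤ (k : ℝ≥0∞)) → (∀ σ, Y σ ≤ (k : ℝ≥0∞)) →
      X = Phi G body E X → Y = Phi G body E Y → X ≤ Y := by
    intro X Y hXk hYk hX hY σ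
    have h3 : ∀ n, X σ ≤ Y σ + k * (1 - ∑' τ, mu G body n σ τ) := fun n =>
      ((fixed_bounds G body k hE hXk hX n σ).2).trans
        (add_le_add_left ((fixed_bounds G body k hE hYk hY n σ).1) _)
    have h4 : X σ ≤ ⨅ n, (Y σ + k * (1 - ∑' τ, mu G body n σ τ)) := le_iInf h3
    have h5 : (⨅ n, (Y σ + k * (1 - ∑' τ, mu G body n σ τ))) = Y σ := by
      rw [← ENNReal.add_iInf]
      have : (⨅ n, (k : ℝ≥0∞) * (1 - ∑' τ, mu G body n σ τ)) = 0 := by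
        rw [← ENNReal.mul_iInf (by simp), ← ENNReal.sub_iSup one_ne_top, hTsup σ]
        simp
      rw [this, add_zero]
    rw [h5] at h4
    exact h4
  constructor
  · intro hI
    exact le_antisymm (main I L hIk hLk hI hLfix) (main L I hLk hIk hLfix hI)
  · intro hI
    rw [hI]
    exact hLfix
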